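/- Let $\epsilon>0$, $\bar c>0$, $\bar v>0$ with $\epsilon\bar c<1$, $\epsilon\bar v<1$ and $\bar v>\bar c$. With $E_1,E_2,E_3$ and $\widebar C_1,\widebar C_2$ defined as in the Lopatinskii analysis (i.e. $E_1=2\epsilon^4\bar c^2\bar v^2-\epsilon^2\bar c^2-1$, $E_2=2\epsilon^4\bar c^2\bar v^4-6\epsilon^2\bar c^2\bar v^2+2\bar v^2+2\bar c^2$, $E_3=2\bar c^2\bar v^2-\epsilon^2\bar c^2\bar v^4-\bar v^4$), assume $E_3<0$ and set $z_2^2=\frac{E_2+\sqrt{E_2^2-4E_1E_3}}{-2E_1}$. Then $z_2^2>(\widebar C_1^{-1}+\widebar C_2)^2$. -/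

import Mathlib

/-- the larger root satisfies `z₂² > (C̄₁⁻¹ + C̄₂)²`. -/
theorem stmt11 (ε c v : ℝ) (hε : 0 < ε) (hc : 0 < c) (hv : 0 < v)
    (hεc : ε * c < 1) (hεv : ε * v < 1) (hvc : v > c) :
    let E₁ : ℝ := 2 * ε ^ 4 * c ^ 2 * v ^ 2 - ε ^ 2 * c ^ 2 - 1
    let E₂ : ℝ := 2 * ε ^ 4 * c ^ 2 * v ^ 4 - 6 * ε ^ 2 * c ^ 2 * v ^ 2 + 2 * v ^ 2 + 2 * c ^ 2
    let E₃ : ℝ := 2 * c ^ 2 * v ^ 2 - ε ^ 2 * c ^ 2 * v ^ 4 - v ^ 4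
    let C₁ : ℝ := (1 - ε ^ 4 * c ^ 2 * v ^ 2) / ((1 - ε ^ 2 * v ^ 2) * c)
    let C₂ : ℝ := ((1 - ε ^ 2 * c ^ 2) * v) / (1 - ε ^ 4 * c ^ 2 * v ^ 2)
    E₃ < 0 →
      (E₂ + Real.sqrt (E₂ ^ 2 - 4 * E₁ * E₃)) / (-(2 * E₁)) > (C₁⁻¹ + C₂) ^ 2 := by
  intro E₁ E₂ E₃ C₁ C₂ _hE₃
  have hεc0 : 0 < ε * c := mul_pos hε hc
  have hεv0 : 0 < ε * v := mul_pos hε hv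
  have h1 : 0 < 1 - ε ^ 2 * c ^ 2 := by nlinarith
  have h2 : 0 < 1 - ε ^ 2 * v ^ 2 := by nlinarith
  have h3 : 0 < 1 + ε ^ 2 * c * v := by nlinarith
  have hp : ε * c * (ε * v) < 1 := by nlinarith
  have h4 : 0 < 1 - ε ^ 4 * c ^ 2 * v ^ 2 := by nlinarith [mul_pos hεc0 hεv0]
  have hE1 : E₁ < 0 := by
    show 2 * ε ^ 4 * c ^ 2 * v ^ 2 - ε ^ 2 * c ^ 2 - 1 < 0
    nlinarith [h4, mul_pos (show (0:ℝ) < ε ^ 2 * c ^ 2 by positivity) h2]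
  set T : ℝ := (c + v) / (1 + ε ^ 2 * c * v) with hT
  have hTeq : C₁⁻¹ + C₂ = T := by
    show ((1 - ε ^ 4 * c ^ 2 * v ^ 2) / ((1 - ε ^ 2 * v ^ 2) * c))⁻¹ +
        ((1 - ε ^ 2 * c ^ 2) * v) / (1 - ε ^ 4 * c ^ 2 * v ^ 2) = T
    rw [inv_div, hT]
    field_simp [h4.ne', h2.ne', h3.ne', hc.ne']
    rw [div_eq_iff (ne_of_gt (by linarith [h4]))]
    ring
  have hQ : E₁ * T ^ 4 + E₂ * T ^ 2 + E₃ =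
      c ^ 4 * (1 - ε ^ 2 * c ^ 2) * (1 - ε ^ 2 * v ^ 2) ^ 4 / (1 + ε ^ 2 * c * v) ^ 4 := by
    show (2 * ε ^ 4 * c ^ 2 * v ^ 2 - ε ^ 2 * c ^ 2 - 1) * T ^ 4 +
        (2 * ε ^ 4 * c ^ 2 * v ^ 4 - 6 * ε ^ 2 * c ^ 2 * v ^ 2 + 2 * v ^ 2 + 2 * c ^ 2) * T ^ 2 +
        (2 * c ^ 2 * v ^ 2 - ε ^ 2 * c ^ 2 * v ^ 4 - v ^ 4) = _
    rw [hT]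
    field_simp
    ring
  have hQpos : 0 < E₁ * T ^ 4 + E₂ * T ^ 2 + E₃ := by
    rw [hQ]; positivity
  have hEQ : E₁ * (E₁ * T ^ 4 + E₂ * T ^ 2 + E₃) < 0 :=
    mul_neg_of_neg_of_pos hE1 hQpos
  have hden : 0 < -(2 * E₁) := by linarith
  rw [hTeq, gt_iff_lt, lt_div_iff₀ hden]
  have hR : T ^ 2 * (-(2 * E₁)) - E₂ < Real.sqrt (E₂ ^ 2 - 4 * E₁ * E₃) := by
    rcases lt_or_ge (T ^ 2 * (-(2 * E₁)) - E₂) 0 with h | h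
    · exact lt_of_lt_of_le h (Real.sqrt_nonneg _)
    · rw [Real.lt_sqrt h]
      nlinarith [hEQ]
  linarith [hR]
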